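/- arXiv:2409.08200 — 6 statements merged into one kernel-verified Lean document; each statement's English description precedes it below -/
import Mathlib

section
/- For any three preorders P, Q, R on a set X with R ⪯ P ⪯ Q, the following equivalence holds: R ⪯ P ∧ Q^op if and only if P ∨ R^op ⪯ Q. Hence the maps F_P(R) = P ∨ R^op and G_P(Q) = P ∧ Q^op form a Galois correspondence between the poset of preorders below P and the poset of preorders above P. -/
open scoped Classical

/-- A preorder on `X`, bundled as a reflexive and transitive relation. -/
structure Preo (X : Type*) where
  le : X → X → Prop
  le_refl : ∀ x, le x x
  le_trans : ∀ {x y z}, le x y → le y z → le x z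

namespace Preo

variable {X : Type*}

/-- The refinement partial order `P ⪯ Q` on preorders: `x ≤_P y` implies `x ≤_Q y`. -/
def Le (P Q : Preo X) : Prop := ∀ ⦃a b⦄, P.le a b → Q.le a b

/-- The opposite preorder. -/
def op (P : Preo X) : Preo X where
  le a b := P.le b a
  le_refl x := P.le_refl x
  le_trans h h' := P.le_trans h' h

/-- The meet (pointwise intersection) of two preorders. -/
def meet (P Q : Preo X) : Preo X where
  le a b := P.le a b ∧ Q.le a b
  le_refl x := ⟨P.le_refl x, Q.le_refl x⟩
  le_trans h h' := ⟨P.le_trans h.1 h'.1, Q.le_trans h.2 h'.2⟩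

/-- The join of two preorders: zigzag chains, i.e. the reflexive-transitive closure
of the union of the two relations. -/
def join (P Q : Preo X) : Preo X where
  le a b := Relation.ReflTransGen (fun u v => P.le u v ∨ Q.le u v) a b
  le_refl _ := Relation.ReflTransGen.refl
  le_trans h h' := Relation.ReflTransGen.trans h h'

/-- The bubble relation: `a` and `b` lie in the same bubble of `P`. -/
def bubRel (P : Preo X) (a b : X) : Prop := P.le a b ∧ P.le b a

/-- `R ◁ P` : `R` is a subdivision of `P`, i.e. `R ⪯ P` and `R = P ∧ (P^op ∨ R)`. -/
def Subdiv (R P : Preo X) : Prop := R.Le P ∧ R = P.meet (P.op.join R)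

/-- `P ◀ Q` : `Q` is a contraction of `P`, i.e. `P ⪯ Q` and `Q = P ∨ (P^op ∧ Q)`. -/
def Contr (P Q : Preo X) : Prop := P.Le Q ∧ Q = P.join (P.op.meet Q)

/-- `K` is a convex subset for the preorder `P`. -/
def ConvexIn (P : Preo X) (K : Set X) : Prop :=
  ∀ ⦃x y z⦄, x ∈ K → y ∈ K → P.le x z → P.le z y → z ∈ K

/-- `K` is connected for (the restriction to `K` of) the preorder `P`:
any two of its elements are joined by a zigzag chain of comparabilities within `K`. -/
def ConnectedIn (P : Preo X) (K : Set X) : Prop :=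
  ∀ ⦃x y⦄, x ∈ K → y ∈ K →
    Relation.ReflTransGen (fun u v => u ∈ K ∧ v ∈ K ∧ (P.le u v ∨ P.le v u)) x y

/-- A total preorder. -/
def Total (P : Preo X) : Prop := ∀ a b, P.le a b ∨ P.le b a

/-- `L` is a linear extension of `P`: `L` is total, `P ⪯ L`, and the bubbles coincide. -/
def IsLinExt (P L : Preo X) : Prop :=
  L.Total ∧ P.Le L ∧ ∀ a b, P.bubRel a b ↔ L.bubRel a b

/-- A finite down-set of the preorder `P`. -/
def IsDownset (P : Preo X) (A : Finset X) : Prop :=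
  ∀ ⦃x y⦄, y ∈ A → P.le x y → x ∈ A

/-- A convex finite subset of the preorder `P`. -/
def ConvexF (P : Preo X) (C : Finset X) : Prop :=
  ∀ ⦃x y z⦄, x ∈ C → y ∈ C → P.le x z → P.le z y → z ∈ C

/-- The down-set generated by a finite set `C`. -/
noncomputable def downClosure [Fintype X] (P : Preo X) (C : Finset X) : Finset X :=
  Finset.univ.filter (fun x => ∃ y ∈ C, P.le x y)

/-- The bubble of an element `a`. -/
noncomputable def bubble [Fintype X] (P : Preo X) (a : X) : Finset X :=
  Finset.univ.filter (fun x => P.le a x ∧ P.le x a)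

/-- The set of bubbles of `P`. -/
noncomputable def bubbles [Fintype X] (P : Preo X) : Finset (Finset X) :=
  Finset.univ.image (fun a => P.bubble a)

/-- `R` is a positive sub-preorder of `P`: in any loop
`x = x₀ ≤_R x₁ ≥_P x₂ ≤_R ⋯ ≤_R x_{2k-1} ≥_P x_{2k} = x`,
every descending step `≥_P` is actually `≥_R`. -/
def PositiveSub (R P : Preo X) : Prop :=
  ∀ (k : ℕ) (x : ℕ → X), x (2 * k) = x 0 →
    (∀ i < k, R.le (x (2 * i)) (x (2 * i + 1))) →
    (∀ i < k, P.le (x (2 * i + 2)) (x (2 * i + 1))) →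
    ∀ i < k, R.le (x (2 * i + 2)) (x (2 * i + 1))

end Preo

section Submod

variable {I : Type*} [Fintype I] [DecidableEq I]

/-- A function `z : P(I) → ℝ ∪ {∞}` is submodular if
`z(S ∪ T) + z(S ∩ T) ≤ z(S) + z(T)` for all `S, T`. -/
def Submodular (z : Finset I → WithTop ℝ) : Prop :=
  ∀ S T : Finset I, z (S ∪ T) + z (S ∩ T) ≤ z S + z T

/-- The corestriction `z_{/A}` : `U ↦ z(A ∪ U) − z(A)` (meaningful when `z A ≠ ⊤`). -/
noncomputable def coRes (z : Finset I → WithTop ℝ) (A U : Finset I) : WithTop ℝ :=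
  z (A ∪ U) + ((-(z A).untopD 0 : ℝ) : WithTop ℝ)

/-- The extended generalized permutahedron of `z`:
`x_I = z(I)` and `x_A ≤ z(A)` whenever `z(A) < ∞`. -/
def EGP (z : Finset I → WithTop ℝ) : Set (I → ℝ) :=
  {x | ((∑ i, x i : ℝ) : WithTop ℝ) = z Finset.univ ∧
       ∀ A : Finset I, ((∑ i ∈ A, x i : ℝ) : WithTop ℝ) ≤ z A}

/-- `z` restricted to subsets of `C` decomposes as the product of its restrictions to `S`
and `T`, where `C = S ⊔ T`. -/
def SplitsAlong (z : Finset I → WithTop ℝ) (C S T : Finset I) : Prop :=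
  Disjoint S T ∧ S ∪ T = C ∧ ∀ E ⊆ C, z E = z (E ∩ S) + z (E ∩ T)

/-- `z` restricted to subsets of `C` is indecomposable. -/
def IndecompOn (z : Finset I → WithTop ℝ) (C : Finset I) : Prop :=
  ∀ S T : Finset I, S.Nonempty → T.Nonempty → ¬ SplitsAlong z C S T

/-- `fam` is the partition underlying a factorization of `z` into indecomposable
extended Boolean functions. -/
def IsIndecompFactorization (z : Finset I → WithTop ℝ) (fam : Finset (Finset I)) : Prop :=
  (∀ B ∈ fam, B.Nonempty) ∧
  (∀ B ∈ fam, ∀ B' ∈ fam, B ≠ B' → Disjoint B B') ∧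
  fam.sup id = Finset.univ ∧
  (∀ E : Finset I, z E = ∑ B ∈ fam, z (E ∩ B)) ∧
  ∀ B ∈ fam, IndecompOn z B

/-- A family of finite subsets of `I` forming a topology on `I`. -/
def IsTopologyFam (F : Set (Finset I)) : Prop :=
  ∅ ∈ F ∧ Finset.univ ∈ F ∧ (∀ A ∈ F, ∀ B ∈ F, A ∪ B ∈ F) ∧ ∀ A ∈ F, ∀ B ∈ F, A ∩ B ∈ F

/-- The preorder `P` is compatible with the submodular function `z`. -/
def Compatible (z : Finset I → WithTop ℝ) (P : Preo I) : Prop :=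
  (∀ A : Finset I, P.IsDownset A → z A ≠ ⊤) ∧
  ∀ A B : Finset I, P.IsDownset A → P.IsDownset B → A ⊆ B →
    ∀ C₁ C₂ : Finset I, Disjoint C₁ C₂ → C₁ ∪ C₂ = B \ A →
      (∀ x ∈ C₁, ∀ y ∈ C₂, ¬ P.le x y ∧ ¬ P.le y x) →
      ∀ U ⊆ B \ A, coRes z A U = coRes z A (U ∩ C₁) + coRes z A (U ∩ C₂)

/-- For a convex subset `C` of `P`, the function `z_C : U ↦ z(A ∪ U) − z(A)`, where
`A = (↓C) \ C` with `↓C` the down-set generated by `C`. -/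
noncomputable def zConv (z : Finset I → WithTop ℝ) (P : Preo I) (C U : Finset I) :
    WithTop ℝ :=
  coRes z (P.downClosure C \ C) U

/-- The preorder `P` conforms to the submodular function `z`: it is compatible with `z`
and every product decomposition of `z_C`, for `C` convex in `P`, comes from a
disconnected decomposition of the preorder induced on `C`. -/
def Conforms (z : Finset I → WithTop ℝ) (P : Preo I) : Prop :=
  Compatible z P ∧
  ∀ C : Finset I, P.ConvexF C →
    ∀ C₁ C₂ : Finset I, Disjoint C₁ C₂ → C₁ ∪ C₂ = C →
      (∀ U ⊆ C, zConv z P C U = zConv z P C (U ∩ C₁) + zConv z P C (U ∩ C₂)) →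
      ∀ x ∈ C₁, ∀ y ∈ C₂, ¬ P.le x y ∧ ¬ P.le y x

/-- The preorder `pre(z)` associated to `z`: `x ≤ y` iff every `A` with `z(A) < ∞`
("open set") containing `y` contains `x`. -/
def preZ (z : Finset I → WithTop ℝ) : Preo I where
  le x y := ∀ A : Finset I, z A ≠ ⊤ → y ∈ A → x ∈ A
  le_refl _ := fun _ _ h => h
  le_trans h h' := fun A hA hy => h A hA (h' A hA hy)

/-- The preorder associated (by the Alexandroff correspondence) to a family of subsets. -/
def preOfFam (F : Set (Finset I)) : Preo I where
  le x y := ∀ A ∈ F, y ∈ A → x ∈ A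
  le_refl _ := fun _ _ h => h
  le_trans h h' := fun A hA hy => h A hA (h' A hA hy)

/-- `Alin(P, z)`: the affine space cut out by `x_A = z(A)` for `A` a down-set of `P`. -/
def Alin (z : Finset I → WithTop ℝ) (P : Preo I) : Set (I → ℝ) :=
  {x | ∀ A : Finset I, P.IsDownset A → ((∑ i ∈ A, x i : ℝ) : WithTop ℝ) = z A}

/-- `AlinBu(P, z)`: the affine space cut out by `x_C = z_C(C)` for `C` a bubble of `P`. -/
def AlinBu (z : Finset I → WithTop ℝ) (P : Preo I) : Set (I → ℝ) :=
  {x | ∀ a : I, ((∑ i ∈ P.bubble a, x i : ℝ) : WithTop ℝ) = zConv z P (P.bubble a) (P.bubble a)}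

/-- `Φ_z(P)`: the (possibly empty) face of `Π(z)` cut out by the equalities `x_A = z(A)`
for `A` a down-set of `P`. -/
def Phi (z : Finset I → WithTop ℝ) (P : Preo I) : Set (I → ℝ) :=
  {x | x ∈ EGP z ∧ ∀ A : Finset I, P.IsDownset A → ((∑ i ∈ A, x i : ℝ) : WithTop ℝ) = z A}

/-- `Ψ_z(G)`: the family of sets `A` with `z(A) < ∞` on which `x_A = z(A)` for all `x ∈ G`. -/
def PsiFam (z : Finset I → WithTop ℝ) (G : Set (I → ℝ)) : Set (Finset I) :=
  {A | z A ≠ ⊤ ∧ ∀ x ∈ G, ((∑ i ∈ A, x i : ℝ) : WithTop ℝ) = z A}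

/-- `Ψ_z(G)` as a preorder. -/
def PsiPre (z : Finset I → WithTop ℝ) (G : Set (I → ℝ)) : Preo I :=
  preOfFam (PsiFam z G)

/-- `z_P = ∏_{C ∈ b(P)} z_C`: the product over all bubbles of `P`. -/
noncomputable def zP (z : Finset I → WithTop ℝ) (P : Preo I) : Finset I → WithTop ℝ :=
  fun E => ∑ C ∈ P.bubbles, zConv z P C (E ∩ C)

/-- The restriction `z|_S` of `z` to subsets of `S`. -/
def restrictFn (z : Finset I → WithTop ℝ) (S : Finset I) :
    Finset {x : I // x ∈ S} → WithTop ℝ :=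
  fun U => z (U.map (Function.Embedding.subtype fun x => x ∈ S))

/-- The corestriction `z_{/S}` of `z`, on subsets of `I ∖ S`. -/
noncomputable def coresFn (z : Finset I → WithTop ℝ) (S : Finset I) :
    Finset {x : I // x ∉ S} → WithTop ℝ :=
  fun U => z (S ∪ U.map (Function.Embedding.subtype fun x => x ∉ S)) +
    ((-(z S).untopD 0 : ℝ) : WithTop ℝ)

/-- The restriction `P|_S` of a preorder to `S`. -/
def restrictPre (P : Preo I) (S : Finset I) : Preo {x : I // x ∈ S} where
  le a b := P.le a b
  le_refl a := P.le_refl a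
  le_trans h h' := P.le_trans h h'

/-- The corestriction `P_{/S}` of a preorder, on `I ∖ S`. -/
def coresPre (P : Preo I) (S : Finset I) : Preo {x : I // x ∉ S} where
  le a b := P.le a b
  le_refl a := P.le_refl a
  le_trans h h' := P.le_trans h h'

end Submod

/-- For preorders `R ⪯ P ⪯ Q` on `X`:
`R ⪯ P ∧ Q^op` iff `P ∨ R^op ⪯ Q`; i.e. `F_P(R) = P ∨ R^op` and `G_P(Q) = P ∧ Q^op`
form a Galois correspondence between the preorders below `P` and those above `P`. -/
theorem galois_correspondence
    {X : Type*} (P Q R : Preo X) (hRP : R.Le P) (hPQ : P.Le Q) :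
    R.Le (P.meet Q.op) ↔ (P.join R.op).Le Q := by
  constructor
  · intro h a b hab
    induction hab with
    | refl => exact Q.le_refl _
    | tail _ hstep ih =>
      rcases hstep with hp | hr
      · exact Q.le_trans ih (hPQ hp)
      · exact Q.le_trans ih ((h hr).2)
  · intro h a b hab
    refine ⟨hRP hab, h ?_⟩
    exact Relation.ReflTransGen.single (Or.inr hab)
end

section
/- Fix a preorder P on X. The maps F_P(R) = P ∨ R^op (for R ⪯ P) and G_P(Q) = P ∧ Q^op (for P ⪯ Q) restrict to mutually inverse order-preserving bijections between underline(P) = {R : R ◁ P} and overline(P) = {Q : P ◀ Q}, where R ◁ P and P ◀ Q correspond to each other precisely when both Q = P ∨ R^op and R = P ∧ Q^op hold. -/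
open scoped Classical

namespace Preo

theorem ext' {X : Type*} {P Q : Preo X} (h : P.le = Q.le) : P = Q := by
  cases P; cases Q; cases h; rfl

theorem op_op' {X : Type*} (P : Preo X) : P.op.op = P := ext' rfl

theorem op_meet' {X : Type*} (P Q : Preo X) : (P.meet Q).op = P.op.meet Q.op := ext' rfl

theorem op_join' {X : Type*} (P Q : Preo X) : (P.join Q).op = P.op.join Q.op := by
  refine ext' (funext fun a => funext fun b => propext ?_)
  show Relation.ReflTransGen _ b a ↔ Relation.ReflTransGen _ a b
  rw [show (fun u v => P.op.le u v ∨ Q.op.le u v) =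
      Function.swap (fun u v => P.le u v ∨ Q.le u v) from rfl,
    Relation.reflTransGen_swap]

theorem join_mono' {X : Type*} {P Q P' Q' : Preo X} (h1 : P.Le P') (h2 : Q.Le Q') :
    (P.join Q).Le (P'.join Q') := fun _ _ h =>
  Relation.ReflTransGen.mono (r := fun u v => P.le u v ∨ Q.le u v)
    (p := fun u v => P'.le u v ∨ Q'.le u v) (fun _ _ hu => hu.imp (@h1 _ _) (@h2 _ _)) _ _ h

theorem op_mono' {X : Type*} {P Q : Preo X} (h : P.Le Q) : P.op.Le Q.op :=
  fun _ _ hab => h hab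

theorem subdiv_meet' {X : Type*} {R P : Preo X} (h : Subdiv R P) :
    P.meet (P.join R.op).op = R := by
  rw [op_join', op_op']
  exact h.2.symm

theorem contr_join' {X : Type*} {P Q : Preo X} (h : Contr P Q) :
    P.join (P.meet Q.op).op = Q := by
  rw [op_meet', op_op']
  exact h.2.symm

end Preo

/-- For a fixed preorder `P` on `X`, the maps `F_P(R) = P ∨ R^op` and
`G_P(Q) = P ∧ Q^op` restrict to mutually inverse order-preserving bijections between
`underline(P) = {R : R ◁ P}` and `overline(P) = {Q : P ◀ Q}`, where `R ◁ P` and `P ◀ Q`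
correspond to each other precisely when both `Q = P ∨ R^op` and `R = P ∧ Q^op` hold. -/
theorem subdivisions_contractions_bijection
    {X : Type*} (P : Preo X) :
    (∀ R : Preo X, Preo.Subdiv R P →
        Preo.Contr P (P.join R.op) ∧ P.meet (P.join R.op).op = R) ∧
    (∀ Q : Preo X, Preo.Contr P Q →
        Preo.Subdiv (P.meet Q.op) P ∧ P.join (P.meet Q.op).op = Q) ∧
    (∀ R₁ R₂ : Preo X, Preo.Subdiv R₁ P → Preo.Subdiv R₂ P → R₁.Le R₂ →
        (P.join R₁.op).Le (P.join R₂.op)) ∧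
    (∀ Q₁ Q₂ : Preo X, Preo.Contr P Q₁ → Preo.Contr P Q₂ → Q₁.Le Q₂ →
        (P.meet Q₁.op).Le (P.meet Q₂.op)) ∧
    (∀ R Q : Preo X, Preo.Subdiv R P → Preo.Contr P Q →
        (Q = P.join R.op ↔ R = P.meet Q.op)) := by
  refine ⟨?_, ?_, ?_, ?_, ?_⟩
  · intro R hR
    have hmeet := Preo.subdiv_meet' hR
    have h1 : P.op.meet (P.join R.op) = R.op := by
      have := congrArg Preo.op hmeet
      rwa [Preo.op_meet', Preo.op_op'] at this
    exact ⟨⟨fun a b h => Relation.ReflTransGen.single (Or.inl h), by rw [h1]⟩, hmeet⟩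
  · intro Q hQ
    have hjoin := Preo.contr_join' hQ
    have h2 : P.op.join (P.meet Q.op) = Q.op := by
      have := congrArg Preo.op hjoin
      rwa [Preo.op_join', Preo.op_op'] at this
    exact ⟨⟨fun a b h => h.1, by rw [h2]⟩, hjoin⟩
  · intro R₁ R₂ _ _ h
    exact Preo.join_mono' (fun _ _ hh => hh) (Preo.op_mono' h)
  · intro Q₁ Q₂ _ _ h a b hab
    exact ⟨hab.1, Preo.op_mono' h hab.2⟩
  · intro R Q hR hQ
    constructor
    · intro h; rw [h]; exact (Preo.subdiv_meet' hR).symm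
    · intro h; rw [h]; exact (Preo.contr_join' hQ).symm
end

section
/- For preorders R ⪯ P on X, the following are equivalent: (a) R is a positive sub-preorder of P, i.e., in any loop x = x₀ ≤_R x₁ ≥_P x₂ ≤_R ⋯ ≤_R x_{2k−1} ≥_P x_{2k} = x, every descending step ≥_P is actually ≥_R; (b) the bubbles of P ∨ R^op coincide with the bubbles of R ∨ R^op (i.e., with the connected components of R), and the restrictions of R and P to each connected component of R coincide; (c) R ◁ P, i.e., R = P ∧ (P^op ∨ R). -/
open scoped Classical

namespace PosAux
open Relation Preo
variable {X : Type*} (R P : Preo X)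

/-- The key intermediate condition (★). -/
def Star : Prop := ∀ a b : X, P.le a b → (P.join R.op).le b a → R.le a b

variable {R P}

lemma preo_ext {P Q : Preo X} (h : ∀ a b, P.le a b ↔ Q.le a b) : P = Q := by
  obtain ⟨p, _, _⟩ := P
  obtain ⟨q, _, _⟩ := Q
  have : p = q := funext fun a => funext fun b => propext (h a b)
  subst this
  rfl

lemma F_rev {a b : X} : (P.op.join R).le a b ↔ (P.join R.op).le b a := by
  have : (fun u v : X => P.op.le u v ∨ R.le u v) =
      Function.swap (fun u v : X => P.le u v ∨ R.op.le u v) := by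
    funext u v; simp [Function.swap, Preo.op]
  show Relation.ReflTransGen _ a b ↔ _
  rw [this]
  exact Relation.reflTransGen_swap

lemma E_symm {a b : X} (h : (R.join R.op).le a b) : (R.join R.op).le b a :=
  (@Relation.ReflTransGen.stdSymm _ (fun u v => R.le u v ∨ R.op.le u v) ⟨fun u v h => h.symm⟩).symm _ _ h

lemma E_sub_F (hRP : R.Le P) {a b : X} (h : (R.join R.op).le a b) :
    (P.join R.op).le a b :=
  Relation.ReflTransGen.mono (r := fun u v => R.le u v ∨ R.op.le u v)
    (p := fun u v => P.le u v ∨ R.op.le u v)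
    (fun u v (h : R.le u v ∨ R.op.le u v) => h.imp (fun h' => hRP h') id) _ _ h

/-- Extract an explicit finite chain from a join relation. -/
lemma chain_of_F {a b : X} (h : (P.join R.op).le b a) :
    ∃ (n : ℕ) (y : ℕ → X), y 0 = b ∧ y n = a ∧
      ∀ j < n, P.le (y j) (y (j + 1)) ∨ R.le (y (j + 1)) (y j) := by
  induction h with
  | refl => exact ⟨0, fun _ => b, rfl, rfl, by omega⟩
  | @tail c d h1 h2 ih =>
    obtain ⟨n, y, h0, hn, hs⟩ := ih
    refine ⟨n + 1, fun j => if j ≤ n then y j else d, by simp [h0], by simp, ?_⟩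
    intro j hj
    dsimp only
    rcases Nat.lt_or_ge j n with hjn | hjn
    · have e1 : (if j ≤ n then y j else d) = y j := if_pos (by omega)
      have e2 : (if j + 1 ≤ n then y (j + 1) else d) = y (j + 1) := if_pos (by omega)
      rw [e1, e2]; exact hs j hjn
    · have hjn' : j = n := by omega
      subst hjn'
      have e1 : (if j ≤ j then y j else d) = y j := if_pos le_rfl
      have e2 : (if j + 1 ≤ j then y (j + 1) else d) = d := if_neg (by omega)
      rw [e1, e2, hn]
      exact h2

lemma star_of_pos (hpos : R.PositiveSub P) : Star R P := by
  intro a b hPab hF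
  obtain ⟨n, y, h0, hn, hs⟩ := chain_of_F hF
  -- reversed chain, with closing edge at index n
  set z : ℕ → X := fun j => if j ≤ n then y (n - j) else a with hz
  have hz0 : z 0 = a := by simp [hz, hn]
  have hzn : z n = b := by simp [hz, h0]
  have hzn1 : z (n + 1) = a := by simp [hz]
  have hstep : ∀ j < n + 1, P.le (z (j + 1)) (z j) ∨ R.le (z j) (z (j + 1)) := by
    intro j hj
    rcases Nat.lt_or_ge j n with hjn | hjn
    · have e1 : z j = y (n - j) := if_pos (by omega)
      have e2 : z (j + 1) = y (n - j - 1) := by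
        have : z (j + 1) = y (n - (j + 1)) := if_pos (by omega)
        rw [this]; rfl
      rw [e1, e2]
      have := hs (n - j - 1) (by omega)
      have e3 : n - j - 1 + 1 = n - j := by omega
      rw [e3] at this
      exact this.imp id id
    · have hjn' : j = n := by omega
      subst hjn'
      rw [hzn, hzn1]
      exact Or.inl hPab
  -- the padded loop
  set x : ℕ → X := fun m => if m % 2 = 0 then z (m / 2)
    else if P.le (z (m / 2 + 1)) (z (m / 2)) then z (m / 2) else z (m / 2 + 1) with hx
  have hxe : ∀ j, x (2 * j) = z j := by
    intro j
    have h1 : (2 * j) % 2 = 0 := by omega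
    have h2 : (2 * j) / 2 = j := by omega
    simp [hx, h1, h2]
  have hxo : ∀ j, x (2 * j + 1) =
      if P.le (z (j + 1)) (z j) then z j else z (j + 1) := by
    intro j
    have h1 : (2 * j + 1) % 2 = 1 := by omega
    have h2 : (2 * j + 1) / 2 = j := by omega
    simp [hx, h1, h2]
  have hloop : x (2 * (n + 1)) = x 0 := by
    rw [hxe]
    have : x 0 = z 0 := hxe 0
    rw [this, hz0, hzn1]
  have hR : ∀ i < n + 1, R.le (x (2 * i)) (x (2 * i + 1)) := by
    intro i hi
    rw [hxe, hxo]
    split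
    · exact R.le_refl _
    · rcases hstep i hi with h | h
      · exact absurd h (by assumption)
      · exact h
  have hP : ∀ i < n + 1, P.le (x (2 * i + 2)) (x (2 * i + 1)) := by
    intro i hi
    have e : 2 * i + 2 = 2 * (i + 1) := by ring
    rw [e, hxe, hxo]
    split
    · assumption
    · exact P.le_refl _
  have := hpos (n + 1) x hloop hR hP n (by omega)
  have e : 2 * n + 2 = 2 * (n + 1) := by ring
  rw [e, hxe, hxo, hzn1, hzn] at this
  rwa [if_pos hPab] at this

lemma pos_of_star (hstar : Star R P) : R.PositiveSub P := by
  intro k x hloop hR hP i hik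
  -- walking backwards along the loop
  have back : ∀ d m, m + d ≤ k → (P.join R.op).le (x (2 * (m + d))) (x (2 * m)) := by
    intro d
    induction d with
    | zero => intro m _; exact Relation.ReflTransGen.refl
    | succ d ih =>
      intro m hm
      have h1 : (P.join R.op).le (x (2 * (m + d) + 2)) (x (2 * (m + d))) := by
        refine Relation.ReflTransGen.head (Or.inl (hP (m + d) (by omega))) ?_
        exact Relation.ReflTransGen.single (Or.inr (hR (m + d) (by omega)))
      have e : 2 * (m + Nat.succ d) = 2 * (m + d) + 2 := by omega
      rw [e]
      exact Relation.ReflTransGen.trans h1 (ih m (by omega))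
  have hF : (P.join R.op).le (x (2 * i + 1)) (x (2 * i + 2)) := by
    have s1 : (P.join R.op).le (x (2 * i + 1)) (x (2 * i)) :=
      Relation.ReflTransGen.single (Or.inr (hR i hik))
    have s2 : (P.join R.op).le (x (2 * i)) (x (2 * 0)) := by
      have := back i 0 (by omega)
      simpa using this
    have s3 : (P.join R.op).le (x (2 * k)) (x (2 * (i + 1))) := by
      have := back (k - (i + 1)) (i + 1) (by omega)
      have e : i + 1 + (k - (i + 1)) = k := by omega
      rwa [e] at this
    have e0 : x (2 * 0) = x (2 * k) := by
      rw [hloop]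
    have e1 : 2 * (i + 1) = 2 * i + 2 := by ring
    rw [e0] at s2
    rw [e1] at s3
    exact (s1.trans s2).trans s3
  exact hstar _ _ (hP i hik) hF

lemma F_F_to_E (hstar : Star R P) {a b : X}
    (hab : (P.join R.op).le a b) (hba : (P.join R.op).le b a) :
    (R.join R.op).le a b := by
  induction hab with
  | refl => exact Relation.ReflTransGen.refl
  | @tail c d h1 h2 ih =>
    have hda : (P.join R.op).le d a :=
      Relation.ReflTransGen.trans hba Relation.ReflTransGen.refl
    have hca : (P.join R.op).le c a :=
      Relation.ReflTransGen.head h2 hba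
    have hac : (R.join R.op).le a c := ih hca
    have hcd : (R.join R.op).le c d := by
      rcases h2 with h | h
      · -- P.le c d; need R.le c d via Star
        have hdc : (P.join R.op).le d c := Relation.ReflTransGen.trans hba h1
        exact Relation.ReflTransGen.single (Or.inl (hstar c d h hdc))
      · exact Relation.ReflTransGen.single (Or.inr h)
    exact Relation.ReflTransGen.trans hac hcd

lemma b_of_star (hRP : R.Le P) (hstar : Star R P) :
    (∀ a b : X, (P.join R.op).bubRel a b ↔ (R.join R.op).bubRel a b) ∧
      ∀ a b : X, (R.join R.op).le a b → (R.le a b ↔ P.le a b) := by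
  constructor
  · intro a b
    constructor
    · rintro ⟨h1, h2⟩
      exact ⟨F_F_to_E hstar h1 h2, F_F_to_E hstar h2 h1⟩
    · rintro ⟨h1, h2⟩
      exact ⟨E_sub_F hRP h1, E_sub_F hRP h2⟩
  · intro a b hE
    constructor
    · exact fun h => hRP h
    · intro hP'
      exact hstar a b hP' (E_sub_F hRP (E_symm hE))

lemma star_of_b
    (hb : (∀ a b : X, (P.join R.op).bubRel a b ↔ (R.join R.op).bubRel a b) ∧
      ∀ a b : X, (R.join R.op).le a b → (R.le a b ↔ P.le a b))
    (hRP : R.Le P) : Star R P := by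
  intro a b hPab hF
  have hFab : (P.join R.op).le a b := Relation.ReflTransGen.single (Or.inl hPab)
  have hE : (R.join R.op).le a b := ((hb.1 a b).mp ⟨hFab, hF⟩).1
  exact (hb.2 a b hE).mpr hPab

lemma subdiv_iff_star (hRP : R.Le P) : R.Subdiv P ↔ Star R P := by
  constructor
  · rintro ⟨-, heq⟩ a b hPab hF
    have hG : (P.op.join R).le a b := F_rev.mpr hF
    show R.le a b
    rw [heq]
    exact ⟨hPab, hG⟩
  · intro hstar
    refine ⟨hRP, preo_ext fun a b => ?_⟩
    constructor
    · intro h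
      exact ⟨hRP h, Relation.ReflTransGen.single (Or.inr h)⟩
    · rintro ⟨hp, hg⟩
      exact hstar a b hp (F_rev.mp hg)

end PosAux


/-- For preorders `R ⪯ P` on `X`, the following are equivalent:
(a) `R` is a positive sub-preorder of `P` (in every loop the descending `≥_P` steps are
`≥_R`); (b) the bubbles of `P ∨ R^op` coincide with the bubbles of `R ∨ R^op` and the
restrictions of `R` and `P` to the connected components of `R` coincide; (c) `R ◁ P`. -/
theorem positive_admissible_subdivision_equiv
    {X : Type*} (R P : Preo X) (hRP : R.Le P) :
    (Preo.PositiveSub R P ↔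
      ((∀ a b : X, (P.join R.op).bubRel a b ↔ (R.join R.op).bubRel a b) ∧
       ∀ a b : X, (R.join R.op).le a b → (R.le a b ↔ P.le a b))) ∧
    (Preo.PositiveSub R P ↔ Preo.Subdiv R P) := by
  constructor
  · exact ⟨fun h => PosAux.b_of_star hRP (PosAux.star_of_pos h),
      fun h => PosAux.pos_of_star (PosAux.star_of_b h hRP)⟩
  · exact ⟨fun h => (PosAux.subdiv_iff_star hRP).mpr (PosAux.star_of_pos h),
      fun h => PosAux.pos_of_star ((PosAux.subdiv_iff_star hRP).mp h)⟩
end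

section
/- Suppose the preorder P is compatible with the submodular function z on I. If B ⊇ A and B' ⊇ A' are down-sets of P with B ∖ A = B' ∖ A' = C, then z_{B/A} = z_{B'/A'}; that is, the corestricted function depends only on the convex set C and not on the particular way of writing C as a difference of down-sets. -/
open scoped Classical

private lemma aux_cancel (x y : WithTop ℝ) (p q c : ℝ)
    (h : x + (p : WithTop ℝ) = (c : WithTop ℝ) + (y + (q : WithTop ℝ))) :
    x + ((p - c : ℝ) : WithTop ℝ) = y + (q : WithTop ℝ) := by
  induction x using WithTop.recTopCoe with
  | top =>
    induction y using WithTop.recTopCoe with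
    | top => simp
    | coe b =>
      simp only [top_add] at h
      exact absurd h.symm (WithTop.add_ne_top.mpr ⟨WithTop.coe_ne_top,
        WithTop.add_ne_top.mpr ⟨WithTop.coe_ne_top, WithTop.coe_ne_top⟩⟩)
  | coe a =>
    induction y using WithTop.recTopCoe with
    | top =>
      simp only [← WithTop.coe_add] at h
      simp at h
    | coe b =>
      simp only [← WithTop.coe_add] at h ⊢
      rw [WithTop.coe_inj] at h ⊢
      linarith

private lemma nested_coRes
    {I : Type*} [Fintype I] [DecidableEq I]
    (z : Finset I → WithTop ℝ) (P : Preo I) (hcomp : Compatible z P)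
    (A₀ A C : Finset I)
    (hA₀ : P.IsDownset A₀) (hA : P.IsDownset A)
    (hB : P.IsDownset (A ∪ C)) (hB₀ : P.IsDownset (A₀ ∪ C))
    (hsub : A₀ ⊆ A) (hdA : Disjoint A C) :
    ∀ U ⊆ C, coRes z A U = coRes z A₀ U := by
  intro U hU
  set D := A \ A₀ with hD
  have hxAC : ∀ x ∈ A, x ∉ C := fun x hx hxC =>
    (Finset.disjoint_left.mp hdA) hx hxC
  have hxCA : ∀ x ∈ C, x ∉ A := fun x hx hxA => hxAC x hxA hx
  have hxCA₀ : ∀ x ∈ C, x ∉ A₀ := fun x hx hxA₀ => hxCA x hx (hsub hxA₀)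
  have hDC : Disjoint D C := by
    rw [Finset.disjoint_left]
    intro x hx hxC
    exact hxCA x hxC (Finset.mem_sdiff.mp hx).1
  have hunion : D ∪ C = (A ∪ C) \ A₀ := by
    ext x
    simp only [hD, Finset.mem_union, Finset.mem_sdiff]
    constructor
    · rintro (⟨hxA, hxA₀⟩ | hxC)
      · exact ⟨Or.inl hxA, hxA₀⟩
      · exact ⟨Or.inr hxC, hxCA₀ x hxC⟩
    · rintro ⟨(hxA | hxC), hxA₀⟩
      · exact Or.inl ⟨hxA, hxA₀⟩
      · exact Or.inr hxC
  have hinc : ∀ x ∈ D, ∀ y ∈ C, ¬ P.le x y ∧ ¬ P.le y x := by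
    intro x hx y hy
    obtain ⟨hxA, hxA₀⟩ := Finset.mem_sdiff.mp hx
    constructor
    · intro hle
      have hy' : y ∈ A₀ ∪ C := Finset.mem_union_right _ hy
      have hx' : x ∈ A₀ ∪ C := hB₀ hy' hle
      rcases Finset.mem_union.mp hx' with h | h
      · exact hxA₀ h
      · exact hxAC x hxA h
    · intro hle
      exact hxCA y hy (hA hxA hle)
  have hsubAB : A₀ ⊆ A ∪ C := hsub.trans Finset.subset_union_left
  have hDU : D ∪ U ⊆ (A ∪ C) \ A₀ := by
    rw [← hunion]
    exact Finset.union_subset_union_right hU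
  have key := hcomp.2 A₀ (A ∪ C) hA₀ hB hsubAB D C hDC hunion hinc (D ∪ U) hDU
  -- simplify the intersections
  have hUC : ∀ x ∈ U, x ∈ C := fun x hx => hU hx
  have h1 : (D ∪ U) ∩ D = D := by
    ext x
    simp only [Finset.mem_inter, Finset.mem_union]
    constructor
    · rintro ⟨_, hx⟩; exact hx
    · intro hx; exact ⟨Or.inl hx, hx⟩
  have h2 : (D ∪ U) ∩ C = U := by
    ext x
    simp only [Finset.mem_inter, Finset.mem_union]
    constructor
    · rintro ⟨hx | hx, hxC⟩
      · exact absurd hxC (Finset.disjoint_left.mp hDC hx)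
      · exact hx
    · intro hx; exact ⟨Or.inr hx, hUC x hx⟩
  have hA₀D : A₀ ∪ D = A := by
    rw [hD]
    exact Finset.union_sdiff_of_subset hsub
  have hA₀DU : A₀ ∪ (D ∪ U) = A ∪ U := by
    rw [← Finset.union_assoc, hA₀D]
  obtain ⟨a₀, ha₀⟩ := WithTop.ne_top_iff_exists.mp (hcomp.1 A₀ hA₀)
  obtain ⟨a, ha⟩ := WithTop.ne_top_iff_exists.mp (hcomp.1 A hA)
  rw [h1, h2] at key
  unfold coRes at key ⊢
  rw [show A₀ ∪ (D ∪ U) = A ∪ U from hA₀DU, hA₀D] at key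
  rw [← ha₀, ← ha] at key ⊢
  simp only [WithTop.untopD_coe] at key ⊢
  have key' : z (A ∪ U) + ((-a₀ : ℝ) : WithTop ℝ) =
      ((a - a₀ : ℝ) : WithTop ℝ) + (z (A₀ ∪ U) + ((-a₀ : ℝ) : WithTop ℝ)) := by
    rw [key, ← WithTop.coe_add, ← sub_eq_add_neg]
  have := aux_cancel (z (A ∪ U)) (z (A₀ ∪ U)) (-a₀) (-a₀) (a - a₀) key'
  convert this using 3
  ring

/-- If the preorder `P` is compatible with the submodular function `z`,
and `B ⊇ A`, `B' ⊇ A'` are down-sets of `P` with `B ∖ A = B' ∖ A' = C`, then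
`z_{B/A} = z_{B'/A'}` as functions on subsets of `C`. -/
theorem corestriction_welldefined
    {I : Type*} [Fintype I] [DecidableEq I]
    (z : Finset I → WithTop ℝ) (hz0 : z ∅ = 0) (hzI : z Finset.univ ≠ ⊤)
    (hsub : Submodular z) (P : Preo I) (hcomp : Compatible z P)
    (A B A' B' : Finset I)
    (hA : P.IsDownset A) (hB : P.IsDownset B) (hA' : P.IsDownset A') (hB' : P.IsDownset B')
    (hAB : A ⊆ B) (hAB' : A' ⊆ B') (hC : B \ A = B' \ A') :
    ∀ U ⊆ B \ A, coRes z A U = coRes z A' U := by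
  set C := B \ A with hCdef
  have hAC : A ∪ C = B := Finset.union_sdiff_of_subset hAB
  have hA'C : A' ∪ C = B' := by
    rw [hC]
    exact Finset.union_sdiff_of_subset hAB'
  have hdA : Disjoint A C := Finset.disjoint_sdiff
  have hdA' : Disjoint A' C := by
    rw [hC]; exact Finset.disjoint_sdiff
  set A₀ := A ∩ A' with hA₀def
  have hA₀ : P.IsDownset A₀ := by
    intro x y hy hxy
    rw [hA₀def, Finset.mem_inter] at hy ⊢
    exact ⟨hA hy.1 hxy, hA' hy.2 hxy⟩
  have hBB' : P.IsDownset (B ∩ B') := by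
    intro x y hy hxy
    rw [Finset.mem_inter] at hy ⊢
    exact ⟨hB hy.1 hxy, hB' hy.2 hxy⟩
  have hA₀C : A₀ ∪ C = B ∩ B' := by
    ext x
    simp only [hA₀def, Finset.mem_union, Finset.mem_inter]
    constructor
    · rintro (⟨hxA, hxA'⟩ | hxC)
      · exact ⟨hAB hxA, hAB' hxA'⟩
      · constructor
        · rw [← hAC]; exact Finset.mem_union_right _ hxC
        · rw [← hA'C]; exact Finset.mem_union_right _ hxC
    · rintro ⟨hxB, hxB'⟩
      by_cases hxC : x ∈ C
      · exact Or.inr hxC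
      · refine Or.inl ⟨?_, ?_⟩
        · rcases Finset.mem_union.mp (hAC ▸ hxB : x ∈ A ∪ C) with h | h
          · exact h
          · exact absurd h hxC
        · rcases Finset.mem_union.mp (hA'C ▸ hxB' : x ∈ A' ∪ C) with h | h
          · exact h
          · exact absurd h hxC
  have hB₀ : P.IsDownset (A₀ ∪ C) := hA₀C ▸ hBB'
  have h1 := nested_coRes z P hcomp A₀ A C hA₀ hA (hAC ▸ hB) hB₀
    Finset.inter_subset_left hdA
  have h2 := nested_coRes z P hcomp A₀ A' C hA₀ hA' (hA'C ▸ hB') hB₀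
    Finset.inter_subset_right hdA'
  intro U hU
  rw [h1 U hU, h2 U hU]
end

section
/- Let the preorder P be compatible with the submodular function z on I, and let L be a linear extension of P. Then Alin(P, z) = AlinBu(P, z) = Alin(L, z). -/
open scoped Classical

section Aux

variable {I : Type*} [Fintype I] [DecidableEq I]

/-- Real value of `z` (defaulting to `0` at `⊤`). -/
noncomputable def zr (z : Finset I → WithTop ℝ) (A : Finset I) : ℝ := (z A).untopD 0

lemma coe_zr {z : Finset I → WithTop ℝ} {A : Finset I} (h : z A ≠ ⊤) :
    z A = ((zr z A : ℝ) : WithTop ℝ) := by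
  cases hz : z A with
  | top => exact absurd hz h
  | coe r => simp [zr, hz]

lemma coRes_eq {z : Finset I → WithTop ℝ} {A U : Finset I}
    (hAU : z (A ∪ U) ≠ ⊤) :
    coRes z A U = ((zr z (A ∪ U) - zr z A : ℝ) : WithTop ℝ) := by
  rw [coRes, coe_zr hAU, ← WithTop.coe_add]
  congr 1

lemma downset_of_le {P L : Preo I} (h : P.Le L) {A : Finset I}
    (hA : L.IsDownset A) : P.IsDownset A :=
  fun _ _ hy hle => hA hy (h hle)

lemma isDownset_principal (Q : Preo I) (a : I) :
    Q.IsDownset (Finset.univ.filter fun x => Q.le x a) := by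
  intro u v hv hle
  simp only [Finset.mem_filter, Finset.mem_univ, true_and] at *
  exact Q.le_trans hle hv

lemma isDownset_strict (Q : Preo I) (a : I) :
    Q.IsDownset (Finset.univ.filter fun x => Q.le x a ∧ ¬ Q.le a x) := by
  intro u v hv hle
  simp only [Finset.mem_filter, Finset.mem_univ, true_and] at *
  exact ⟨Q.le_trans hle hv.1, fun h => hv.2 (Q.le_trans h hle)⟩

lemma mem_bubble {P : Preo I} {a x : I} : x ∈ P.bubble a ↔ P.le a x ∧ P.le x a := by
  simp [Preo.bubble]

lemma downClosure_bubble (P : Preo I) (a : I) :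
    P.downClosure (P.bubble a) = Finset.univ.filter (fun x => P.le x a) := by
  ext x
  simp only [Preo.downClosure, Finset.mem_filter, Finset.mem_univ, true_and]
  constructor
  · rintro ⟨y, hy, hle⟩
    exact P.le_trans hle (mem_bubble.mp hy).2
  · intro h
    exact ⟨a, mem_bubble.mpr ⟨P.le_refl a, P.le_refl a⟩, h⟩

lemma sdiff_bubble_eq (P : Preo I) (a : I) :
    P.downClosure (P.bubble a) \ P.bubble a
      = Finset.univ.filter (fun x => P.le x a ∧ ¬ P.le a x) := by
  ext x
  simp only [Finset.mem_sdiff, downClosure_bubble, mem_bubble,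
    Finset.mem_filter, Finset.mem_univ, true_and]
  tauto

lemma bubble_subset_downClosure (P : Preo I) (a : I) :
    P.bubble a ⊆ P.downClosure (P.bubble a) := by
  intro x hx
  rw [downClosure_bubble]
  simp only [Finset.mem_filter, Finset.mem_univ, true_and]
  exact (mem_bubble.mp hx).2

/-- Nested case of independence of corestrictions on the down-set pair. -/
lemma coRes_nested {z : Finset I → WithTop ℝ} {P : Preo I} (hcomp : Compatible z P)
    {A B A' : Finset I} (hA : P.IsDownset A) (hB : P.IsDownset B)
    (hA' : P.IsDownset A') (hB' : P.IsDownset (A' ∪ (B \ A)))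
    (h1 : A' ⊆ A) (h2 : A ⊆ B) :
    zr z B - zr z A = zr z (A' ∪ (B \ A)) - zr z A' := by
  classical
  have hdisj : Disjoint (A \ A') (B \ A) := by
    rw [Finset.disjoint_left]
    intro x hx hx'
    exact (Finset.mem_sdiff.mp hx').2 (Finset.mem_sdiff.mp hx).1
  have hunion : (A \ A') ∪ (B \ A) = B \ A' := by
    ext x
    simp only [Finset.mem_union, Finset.mem_sdiff]
    constructor
    · rintro (⟨h, h'⟩ | ⟨h, h'⟩)
      · exact ⟨h2 h, h'⟩
      · exact ⟨h, fun hx => h' (h1 hx)⟩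
    · rintro ⟨h, h'⟩
      by_cases hxA : x ∈ A
      · exact Or.inl ⟨hxA, h'⟩
      · exact Or.inr ⟨h, hxA⟩
  have hincomp : ∀ x ∈ A \ A', ∀ y ∈ B \ A, ¬ P.le x y ∧ ¬ P.le y x := by
    intro d hd c hc
    rw [Finset.mem_sdiff] at hd hc
    constructor
    · intro hle
      have hdB' : d ∈ A' ∪ (B \ A) :=
        hB' (Finset.mem_union_right _ (Finset.mem_sdiff.mpr hc)) hle
      rcases Finset.mem_union.mp hdB' with h | h
      · exact hd.2 h
      · exact (Finset.mem_sdiff.mp h).2 hd.1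
    · intro hle
      exact hc.2 (hA hd.1 hle)
  have key := hcomp.2 A' B hA' hB (h1.trans h2) (A \ A') (B \ A) hdisj hunion hincomp
    (B \ A') (Finset.Subset.refl _)
  have e1 : A' ∪ (B \ A') = B := Finset.union_sdiff_of_subset (h1.trans h2)
  have e2 : (B \ A') ∩ (A \ A') = A \ A' :=
    Finset.inter_eq_right.mpr (by rw [← hunion]; exact Finset.subset_union_left)
  have e3 : (B \ A') ∩ (B \ A) = B \ A :=
    Finset.inter_eq_right.mpr (by rw [← hunion]; exact Finset.subset_union_right)
  have e4 : A' ∪ (A \ A') = A := Finset.union_sdiff_of_subset h1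
  rw [coRes, coRes, coRes, e1, e2, e3, e4] at key
  have hzB : z B ≠ ⊤ := hcomp.1 B hB
  have hzA : z A ≠ ⊤ := hcomp.1 A hA
  have hzB' : z (A' ∪ (B \ A)) ≠ ⊤ := hcomp.1 _ hB'
  rw [coe_zr hzB, coe_zr hzA, coe_zr hzB', ← WithTop.coe_add, ← WithTop.coe_add,
    ← WithTop.coe_add, ← WithTop.coe_add, WithTop.coe_inj] at key
  have : zr z A' = (z A').untopD 0 := rfl
  rw [← this] at key
  linarith

/-- Independence of the corestriction value on the down-set pair. -/
lemma coRes_indep {z : Finset I → WithTop ℝ} {P : Preo I} (hcomp : Compatible z P)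
    {A B A' B' : Finset I} (hA : P.IsDownset A) (hB : P.IsDownset B)
    (hA' : P.IsDownset A') (hB' : P.IsDownset B')
    (hAB : A ⊆ B) (hA'B' : A' ⊆ B') (hdiff : B \ A = B' \ A') :
    zr z B - zr z A = zr z B' - zr z A' := by
  classical
  have hA2 : P.IsDownset (A ∩ A') := by
    intro x y hy hle
    rw [Finset.mem_inter] at *
    exact ⟨hA hy.1 hle, hA' hy.2 hle⟩
  have hB2 : P.IsDownset ((A ∩ A') ∪ (B \ A)) := by
    intro x y hy hle
    rcases Finset.mem_union.mp hy with h | h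
    · exact Finset.mem_union_left _ (hA2 h hle)
    · have hyB : y ∈ B := (Finset.mem_sdiff.mp h).1
      have hyB' : y ∈ B' := (Finset.mem_sdiff.mp (hdiff ▸ h)).1
      have hxB : x ∈ B := hB hyB hle
      have hxB' : x ∈ B' := hB' hyB' hle
      by_cases hxA : x ∈ A
      · have hxA' : x ∈ A' := by
          by_contra hxA'
          have hmem : x ∈ B' \ A' := Finset.mem_sdiff.mpr ⟨hxB', hxA'⟩
          rw [← hdiff] at hmem
          exact (Finset.mem_sdiff.mp hmem).2 hxA
        exact Finset.mem_union_left _ (Finset.mem_inter.mpr ⟨hxA, hxA'⟩)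
      · exact Finset.mem_union_right _ (Finset.mem_sdiff.mpr ⟨hxB, hxA⟩)
  have e1 := coRes_nested hcomp hA hB hA2 hB2 Finset.inter_subset_left hAB
  have hB2' : P.IsDownset ((A ∩ A') ∪ (B' \ A')) := by rwa [← hdiff]
  have e2 := coRes_nested hcomp hA' hB' hA2 hB2' Finset.inter_subset_right hA'B'
  rw [← hdiff] at e2
  linarith

lemma exists_L_max (L : Preo I) (hT : L.Total) :
    ∀ A : Finset I, A.Nonempty → ∃ a ∈ A, ∀ b ∈ A, L.le b a := by
  intro A
  induction A using Finset.induction_on with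
  | empty => rintro ⟨a, ha⟩; simp at ha
  | @insert x S hx ih =>
    intro _
    rcases S.eq_empty_or_nonempty with rfl | hS
    · refine ⟨x, Finset.mem_insert_self x ∅, ?_⟩
      intro b hb
      simp only [Finset.mem_insert, Finset.notMem_empty, or_false] at hb
      subst hb; exact L.le_refl _
    · obtain ⟨m, hm, hmax⟩ := ih hS
      rcases hT x m with hxm | hmx
      · refine ⟨m, Finset.mem_insert_of_mem hm, ?_⟩
        intro b hb
        rcases Finset.mem_insert.mp hb with rfl | hb
        · exact hxm
        · exact hmax b hb
      · refine ⟨x, Finset.mem_insert_self _ _, ?_⟩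
        intro b hb
        rcases Finset.mem_insert.mp hb with rfl | hb
        · exact L.le_refl _
        · exact L.le_trans (hmax b hb) hmx

lemma zConv_bubble {z : Finset I → WithTop ℝ} {P : Preo I} (hcomp : Compatible z P)
    (a : I) (hdc : P.IsDownset (P.downClosure (P.bubble a))) :
    zConv z P (P.bubble a) (P.bubble a) =
      ((zr z (P.downClosure (P.bubble a))
        - zr z (P.downClosure (P.bubble a) \ P.bubble a) : ℝ) : WithTop ℝ) := by
  have hu : (P.downClosure (P.bubble a) \ P.bubble a) ∪ P.bubble a
      = P.downClosure (P.bubble a) :=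
    Finset.sdiff_union_of_subset (bubble_subset_downClosure P a)
  rw [zConv, coRes_eq (by rw [hu]; exact hcomp.1 _ hdc), hu]

end Aux

/-- If the preorder `P` is compatible with the submodular function `z`
and `L` is a linear extension of `P`, then `Alin(P, z) = AlinBu(P, z) = Alin(L, z)`. -/
theorem alin_alinbu_alinL
    {I : Type*} [Fintype I] [DecidableEq I]
    (z : Finset I → WithTop ℝ) (hz0 : z ∅ = 0) (hzI : z Finset.univ ≠ ⊤)
    (hsub : Submodular z) (P L : Preo I) (hcomp : Compatible z P)
    (hL : Preo.IsLinExt P L) :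
    Alin z P = AlinBu z P ∧ AlinBu z P = Alin z L := by
  classical
  have hPLe : P.Le L := hL.2.1
  -- P-downset facts for bubbles
  have hDCdown : ∀ a : I, P.IsDownset (P.downClosure (P.bubble a)) := by
    intro a; rw [downClosure_bubble]; exact isDownset_principal P a
  have hDC'down : ∀ a : I, P.IsDownset (P.downClosure (P.bubble a) \ P.bubble a) := by
    intro a; rw [sdiff_bubble_eq]; exact isDownset_strict P a
  -- step 1 : Alin P ⊆ Alin L
  have hPL : Alin z P ⊆ Alin z L := fun x hx A hA => hx A (downset_of_le hPLe hA)
  -- step 2 : Alin L ⊆ AlinBu P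
  have hLB : Alin z L ⊆ AlinBu z P := by
    intro x hx a
    have hbub : P.bubble a = L.bubble a := by
      ext u
      rw [mem_bubble, mem_bubble]
      exact hL.2.2 a u
    have hBdown : L.IsDownset (Finset.univ.filter fun y => L.le y a) :=
      isDownset_principal L a
    have hAdown : L.IsDownset (Finset.univ.filter fun y => L.le y a ∧ ¬ L.le a y) :=
      isDownset_strict L a
    have hsubAB : (Finset.univ.filter fun y => L.le y a ∧ ¬ L.le a y)
        ⊆ (Finset.univ.filter fun y => L.le y a) := by
      intro u hu
      simp only [Finset.mem_filter, Finset.mem_univ, true_and] at *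
      exact hu.1
    have hdiffC : (Finset.univ.filter fun y => L.le y a)
        \ (Finset.univ.filter fun y => L.le y a ∧ ¬ L.le a y) = P.bubble a := by
      rw [hbub]
      ext u
      simp only [Finset.mem_sdiff, Finset.mem_filter, Finset.mem_univ, true_and,
        mem_bubble]
      tauto
    have hCsub := bubble_subset_downClosure P a
    have hdiff2 : P.downClosure (P.bubble a) \ (P.downClosure (P.bubble a) \ P.bubble a)
        = (Finset.univ.filter fun y => L.le y a)
          \ (Finset.univ.filter fun y => L.le y a ∧ ¬ L.le a y) := by
      rw [Finset.sdiff_sdiff_eq_self hCsub, hdiffC]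
    have key := coRes_indep hcomp (hDC'down a) (hDCdown a)
      (downset_of_le hPLe hAdown) (downset_of_le hPLe hBdown)
      Finset.sdiff_subset hsubAB hdiff2
    have hxB : (∑ i ∈ (Finset.univ.filter fun y => L.le y a), x i)
        = zr z (Finset.univ.filter fun y => L.le y a) := by
      have h := hx _ hBdown
      rw [coe_zr (hcomp.1 _ (downset_of_le hPLe hBdown)), WithTop.coe_inj] at h
      exact h
    have hxA : (∑ i ∈ (Finset.univ.filter fun y => L.le y a ∧ ¬ L.le a y), x i)
        = zr z (Finset.univ.filter fun y => L.le y a ∧ ¬ L.le a y) := by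
      have h := hx _ hAdown
      rw [coe_zr (hcomp.1 _ (downset_of_le hPLe hAdown)), WithTop.coe_inj] at h
      exact h
    have hsplit := Finset.sum_sdiff (f := x) hsubAB
    rw [hdiffC] at hsplit
    rw [zConv_bubble hcomp a (hDCdown a), WithTop.coe_inj]
    linarith
  -- step 3 : AlinBu P ⊆ Alin P
  have hBP : AlinBu z P ⊆ Alin z P := by
    intro x hx
    suffices h : ∀ A : Finset I, P.IsDownset A → (∑ i ∈ A, x i) = zr z A by
      intro A hA
      rw [coe_zr (hcomp.1 A hA), WithTop.coe_inj]
      exact h A hA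
    intro A
    induction A using Finset.strongInduction with
    | _ A ih =>
      intro hA
      rcases A.eq_empty_or_nonempty with rfl | hne
      · simp [zr, hz0]
      · obtain ⟨a, haA, hamax⟩ := exists_L_max L hL.1 A hne
        have hCA : P.bubble a ⊆ A := fun c hc => hA haA (mem_bubble.mp hc).2
        have haC : a ∈ P.bubble a := mem_bubble.mpr ⟨P.le_refl a, P.le_refl a⟩
        have hA' : P.IsDownset (A \ P.bubble a) := by
          intro u v hv hle
          have hvA := (Finset.mem_sdiff.mp hv).1
          have hvC := (Finset.mem_sdiff.mp hv).2
          refine Finset.mem_sdiff.mpr ⟨hA hvA hle, fun huC => hvC ?_⟩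
          have hav : P.le a v := P.le_trans (mem_bubble.mp huC).1 hle
          exact mem_bubble.mpr ((hL.2.2 a v).mpr ⟨hPLe hav, hamax v hvA⟩)
        have hss : A \ P.bubble a ⊂ A :=
          Finset.sdiff_ssubset hCA ⟨a, haC⟩
        have ihA' := ih _ hss hA'
        have hzc := hx a
        rw [zConv_bubble hcomp a (hDCdown a), WithTop.coe_inj] at hzc
        have key := coRes_indep hcomp (hDC'down a) (hDCdown a) hA' hA
          Finset.sdiff_subset Finset.sdiff_subset
          (by rw [Finset.sdiff_sdiff_eq_self (bubble_subset_downClosure P a),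
                Finset.sdiff_sdiff_eq_self hCA])
        have hsplit := Finset.sum_sdiff (f := x) hCA
        linarith
  constructor
  · exact Set.Subset.antisymm (hPL.trans hLB) hBP
  · exact Set.Subset.antisymm ((hBP.trans hPL).trans (fun _ h => h)) hLB
end

section
/- Let z be a submodular function on I and G a face of Π(z). Then Ψ_z(G) = {A ⊆ I : z(A) < ∞ and x_A = z(A) for every x ∈ G} is a topology on I. If G is the empty face, then Ψ_z(G) = top(z) = {A : z(A) < ∞}. If G is nonempty, then the preorder corresponding to the topology Ψ_z(G) conforms to z. -/
open scoped Classical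

section AuxProof

variable {I : Type*} [Fintype I] [DecidableEq I]

lemma mem_inf_finsets' {α : Type*} (s : Finset α) (f : α → Finset I) (x : I) :
    x ∈ s.inf f ↔ ∀ a ∈ s, x ∈ f a := by
  induction s using Finset.induction with
  | empty => simp [Finset.top_eq_univ]
  | insert a s _ ih => simp [Finset.inf_insert, ih, Finset.mem_inter]

lemma inf_mem_fam {F : Set (Finset I)} (hF : IsTopologyFam F) {α : Type*}
    (s : Finset α) (f : α → Finset I) (hs : ∀ a ∈ s, f a ∈ F) : s.inf f ∈ F := by
  induction s using Finset.induction with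
  | empty => simpa [Finset.top_eq_univ] using hF.2.1
  | @insert a s ha ih =>
      rw [Finset.inf_insert]
      exact hF.2.2.2 _ (hs a (by simp)) _ (ih (fun b hb => hs b (by simp [hb])))

lemma sup_mem_fam {F : Set (Finset I)} (hF : IsTopologyFam F) {α : Type*}
    (s : Finset α) (f : α → Finset I) (hs : ∀ a ∈ s, f a ∈ F) : s.sup f ∈ F := by
  induction s using Finset.induction with
  | empty => simpa using hF.1
  | @insert a s ha ih =>
      rw [Finset.sup_insert]
      exact hF.2.2.1 _ (hs a (by simp)) _ (ih (fun b hb => hs b (by simp [hb])))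

/-- Downsets of the preorder of a topology family belong to the family. -/
lemma downset_mem_fam {F : Set (Finset I)} (hF : IsTopologyFam F) {A : Finset I}
    (hA : (preOfFam F).IsDownset A) : A ∈ F := by
  set MO : I → Finset I := fun y =>
    (Finset.univ.filter (fun D : Finset I => D ∈ F ∧ y ∈ D)).inf id with hMO
  have hmemMO : ∀ x y : I, x ∈ MO y ↔ ∀ D ∈ F, y ∈ D → x ∈ D := by
    intro x y
    rw [hMO]
    rw [mem_inf_finsets']
    constructor
    · intro h D hD hyD; exact h D (by simp [hD, hyD])
    · intro h D hD; rw [Finset.mem_filter] at hD; exact h D hD.2.1 hD.2.2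
  have hAeq : A = A.sup MO := by
    ext x
    rw [Finset.mem_sup]
    constructor
    · intro hx; exact ⟨x, hx, (hmemMO x x).2 (fun _ _ h => h)⟩
    · rintro ⟨y, hy, hxy⟩
      exact hA hy ((hmemMO x y).1 hxy)
  rw [hAeq]
  exact sup_mem_fam hF _ _ (fun y _ =>
    inf_mem_fam hF _ _ (fun D hD => (Finset.mem_filter.mp hD).2.1))

/-- Part 1: `Ψ_z(G)` is a topology. -/
lemma psiFam_isTopology (z : Finset I → WithTop ℝ) (hz0 : z ∅ = 0)
    (hzI : z Finset.univ ≠ ⊤) (hsub : Submodular z) (G : Set (I → ℝ))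
    (hGsub : G ⊆ EGP z) : IsTopologyFam (PsiFam z G) := by
  refine ⟨⟨by simp [hz0], fun x _ => by simp [hz0]⟩,
    ⟨hzI, fun x hx => (hGsub hx).1⟩, ?_, ?_⟩ <;>
  · rintro A ⟨hAfin, hAt⟩ B ⟨hBfin, hBt⟩
    have hABfin : z A + z B ≠ ⊤ := WithTop.add_ne_top.mpr ⟨hAfin, hBfin⟩
    have hfin2 : z (A ∪ B) + z (A ∩ B) ≠ ⊤ := ne_top_of_le_ne_top hABfin (hsub A B)
    have hUfin : z (A ∪ B) ≠ ⊤ := (WithTop.add_ne_top.mp hfin2).1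
    have hIfin : z (A ∩ B) ≠ ⊤ := (WithTop.add_ne_top.mp hfin2).2
    have key : ∀ x ∈ G, ((∑ i ∈ A ∪ B, x i : ℝ) : WithTop ℝ) = z (A ∪ B) ∧
        ((∑ i ∈ A ∩ B, x i : ℝ) : WithTop ℝ) = z (A ∩ B) := by
      intro x hx
      obtain ⟨u, hu⟩ := WithTop.ne_top_iff_exists.mp hUfin
      obtain ⟨v, hv⟩ := WithTop.ne_top_iff_exists.mp hIfin
      obtain ⟨a, ha⟩ := WithTop.ne_top_iff_exists.mp hAfin
      obtain ⟨b, hb⟩ := WithTop.ne_top_iff_exists.mp hBfin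
      have h1 : (∑ i ∈ A ∪ B, x i : ℝ) ≤ u := by
        have := (hGsub hx).2 (A ∪ B); rw [← hu] at this; exact_mod_cast this
      have h2 : (∑ i ∈ A ∩ B, x i : ℝ) ≤ v := by
        have := (hGsub hx).2 (A ∩ B); rw [← hv] at this; exact_mod_cast this
      have h3 : (∑ i ∈ A, x i : ℝ) = a := by
        have := hAt x hx; rw [← ha] at this; exact_mod_cast this
      have h4 : (∑ i ∈ B, x i : ℝ) = b := by
        have := hBt x hx; rw [← hb] at this; exact_mod_cast this
      have h5 : u + v ≤ a + b := by
        have := hsub A B; rw [← hu, ← hv, ← ha, ← hb] at this; exact_mod_cast this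
      have h6 : ∑ i ∈ A ∪ B, x i + ∑ i ∈ A ∩ B, x i = ∑ i ∈ A, x i + ∑ i ∈ B, x i :=
        Finset.sum_union_inter
      constructor
      · rw [← hu]; norm_cast; linarith
      · rw [← hv]; norm_cast; linarith
    first
    | exact ⟨hUfin, fun x hx => (key x hx).1⟩
    | exact ⟨hIfin, fun x hx => (key x hx).2⟩

set_option maxHeartbeats 1000000 in
/-- The key uncrossing computation. -/
lemma key_split (z : Finset I → WithTop ℝ) (hsub : Submodular z) (x : I → ℝ)
    (hx : x ∈ EGP z) (A U₁ U₂ S T : Finset I)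
    (hSfin : z S ≠ ⊤) (hSt : ((∑ i ∈ S, x i : ℝ) : WithTop ℝ) = z S)
    (hTfin : z T ≠ ⊤) (hTt : ((∑ i ∈ T, x i : ℝ) : WithTop ℝ) = z T)
    (hSTfin : z (S ∪ T) ≠ ⊤) (hSTt : ((∑ i ∈ S ∪ T, x i : ℝ) : WithTop ℝ) = z (S ∪ T))
    (hAfin : z A ≠ ⊤) (hAt : ((∑ i ∈ A, x i : ℝ) : WithTop ℝ) = z A)
    (hAS : A ⊆ S) (hAT : A ⊆ T) (hST : S ∩ T = A)
    (hU1 : U₁ ⊆ S) (hU2 : U₂ ⊆ T) (hU1A : ∀ i ∈ U₁, i ∉ A) (hU2A : ∀ i ∈ U₂, i ∉ A) :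
    z (A ∪ U₁ ∪ U₂) + z A = z (A ∪ U₁) + z (A ∪ U₂) := by
  have hU2S : ∀ i ∈ U₂, i ∉ S := by
    intro i hi hiS
    exact hU2A i hi (hST ▸ Finset.mem_inter.mpr ⟨hiS, hU2 hi⟩)
  have hU1T : ∀ i ∈ U₁, i ∉ T := by
    intro i hi hiT
    exact hU1A i hi (hST ▸ Finset.mem_inter.mpr ⟨hU1 hi, hiT⟩)
  have pAS : ∀ i, i ∈ A → i ∈ S := fun i h => hAS h
  have pAT : ∀ i, i ∈ A → i ∈ T := fun i h => hAT h
  have pU1S : ∀ i, i ∈ U₁ → i ∈ S := fun i h => hU1 h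
  have pU2T : ∀ i, i ∈ U₂ → i ∈ T := fun i h => hU2 h
  have pST : ∀ i, i ∈ S → i ∈ T → i ∈ A := fun i h h' => hST ▸ Finset.mem_inter.mpr ⟨h, h'⟩
  have e1u : (A ∪ U₁ ∪ U₂) ∪ S = S ∪ U₂ := by
    ext i; simp only [Finset.mem_union]
    have := pAS i; have := pU1S i; tauto
  have e1i : (A ∪ U₁ ∪ U₂) ∩ S = A ∪ U₁ := by
    ext i; simp only [Finset.mem_inter, Finset.mem_union]
    have := pAS i; have := pU1S i; have := hU2S i; tauto
  have e2u : (S ∪ U₂) ∪ T = S ∪ T := by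
    ext i; simp only [Finset.mem_union]
    have := pU2T i; tauto
  have e2i : (S ∪ U₂) ∩ T = A ∪ U₂ := by
    ext i; simp only [Finset.mem_inter, Finset.mem_union]
    have := pST i; have := pU2T i; have := pAS i; have := pAT i; tauto
  have e3u : (A ∪ U₁) ∪ (A ∪ U₂) = A ∪ U₁ ∪ U₂ := by
    ext i; simp only [Finset.mem_union]; tauto
  have e3i : (A ∪ U₁) ∩ (A ∪ U₂) = A := by
    ext i; simp only [Finset.mem_inter, Finset.mem_union]
    have := pST i; have := pU1S i; have := pU2T i; have := hU1A i; tauto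
  have sub1 := hsub (A ∪ U₁ ∪ U₂) S
  rw [e1u, e1i] at sub1
  have sub2 := hsub (S ∪ U₂) T
  rw [e2u, e2i] at sub2
  have sub3 := hsub (A ∪ U₁) (A ∪ U₂)
  rw [e3u, e3i] at sub3
  rcases eq_or_ne (z (A ∪ U₁ ∪ U₂)) ⊤ with htop | hfin
  · rw [htop, top_add]
    have : (⊤ : WithTop ℝ) ≤ z (A ∪ U₁) + z (A ∪ U₂) := by
      rw [← top_add (z A), ← htop]; exact sub3
    exact (top_le_iff.mp this).symm
  · -- extract real values
    obtain ⟨m, hm⟩ := WithTop.ne_top_iff_exists.mp hfin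
    have hfin1 : z (S ∪ U₂) + z (A ∪ U₁) ≠ ⊤ :=
      ne_top_of_le_ne_top (WithTop.add_ne_top.mpr ⟨hfin, hSfin⟩) sub1
    have hW : z (S ∪ U₂) ≠ ⊤ := (WithTop.add_ne_top.mp hfin1).1
    have hP : z (A ∪ U₁) ≠ ⊤ := (WithTop.add_ne_top.mp hfin1).2
    have hfin2 : z (S ∪ T) + z (A ∪ U₂) ≠ ⊤ :=
      ne_top_of_le_ne_top (WithTop.add_ne_top.mpr ⟨hW, hTfin⟩) sub2
    have hQ : z (A ∪ U₂) ≠ ⊤ := (WithTop.add_ne_top.mp hfin2).2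
    obtain ⟨w, hw⟩ := WithTop.ne_top_iff_exists.mp hW
    obtain ⟨p, hp⟩ := WithTop.ne_top_iff_exists.mp hP
    obtain ⟨q, hq⟩ := WithTop.ne_top_iff_exists.mp hQ
    have hxST : ∑ i ∈ S ∪ T, x i + ∑ i ∈ S ∩ T, x i = ∑ i ∈ S, x i + ∑ i ∈ T, x i :=
      Finset.sum_union_inter
    rw [hST] at hxST
    -- reals
    rw [← hm, ← hp, ← hq, ← hAt]
    rw [← hm, ← hw, ← hp, ← hSt] at sub1
    rw [← hw, ← hq, ← hTt, ← hSTt] at sub2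
    have r1 : w + p ≤ m + ∑ i ∈ S, x i := by exact_mod_cast sub1
    have r2 : (∑ i ∈ S ∪ T, x i) + q ≤ w + ∑ i ∈ T, x i := by exact_mod_cast sub2
    have r3 : m + ∑ i ∈ A, x i ≤ p + q := by
      rw [← hm, ← hp, ← hq, ← hAt] at sub3; exact_mod_cast sub3
    have : m + ∑ i ∈ A, x i = p + q := by linarith
    exact_mod_cast this

/-- tightness facts for members of `PsiFam`. -/
lemma psiFam_tight {z : Finset I → WithTop ℝ} {G : Set (I → ℝ)} {x : I → ℝ} (hx : x ∈ G)
    {D : Finset I} (hD : D ∈ PsiFam z G) :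
    z D ≠ ⊤ ∧ ((∑ i ∈ D, x i : ℝ) : WithTop ℝ) = z D :=
  ⟨hD.1, hD.2 x hx⟩

lemma coRes_split {z : Finset I → WithTop ℝ} {A U U₁ U₂ : Finset I} {r : ℝ}
    (hA : z A = (r : WithTop ℝ))
    (h : z (A ∪ U) + z A = z (A ∪ U₁) + z (A ∪ U₂)) :
    coRes z A U = coRes z A U₁ + coRes z A U₂ := by
  have hr : (z A).untopD 0 = r := by rw [hA]; rfl
  unfold coRes
  rw [hr]
  rcases eq_or_ne (z (A ∪ U)) ⊤ with h1 | h1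
  · rw [hA, h1, top_add] at h
    rcases WithTop.add_eq_top.mp h.symm with h2 | h2 <;>
      simp [h1, h2, top_add, add_top, WithTop.top_add, WithTop.add_top]
  · obtain ⟨a, ha⟩ := WithTop.ne_top_iff_exists.mp h1
    have hRfin : z (A ∪ U₁) + z (A ∪ U₂) ≠ ⊤ := by
      rw [← h, hA]; exact WithTop.add_ne_top.mpr ⟨h1, WithTop.coe_ne_top⟩
    obtain ⟨b, hb⟩ := WithTop.ne_top_iff_exists.mp (WithTop.add_ne_top.mp hRfin).1
    obtain ⟨c, hc⟩ := WithTop.ne_top_iff_exists.mp (WithTop.add_ne_top.mp hRfin).2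
    rw [← ha, ← hb, ← hc]
    rw [← ha, ← hb, ← hc, hA] at h
    have : a + r = b + c := by exact_mod_cast h
    have : a + -r = (b + -r) + (c + -r) := by linarith
    exact_mod_cast this

end AuxProof

/-- For a face `G` of `Π(z)`: the family `Ψ_z(G)` is a topology on `I`;
if `G = ∅` then `Ψ_z(G) = top(z) = {A : z(A) < ∞}`; and if `G` is nonempty then the
preorder corresponding to `Ψ_z(G)` conforms to `z`. -/
theorem psi_of_face
    {I : Type*} [Fintype I] [DecidableEq I]
    (z : Finset I → WithTop ℝ) (hz0 : z ∅ = 0) (hzI : z Finset.univ ≠ ⊤)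
    (hsub : Submodular z) (G : Set (I → ℝ))
    (hGface : IsExposed ℝ (EGP z) G) (hGsub : G ⊆ EGP z) :
    IsTopologyFam (PsiFam z G) ∧
    (G = ∅ → PsiFam z G = {A : Finset I | z A ≠ ⊤}) ∧
    (G.Nonempty → Conforms z (PsiPre z G)) := by
  have htop : IsTopologyFam (PsiFam z G) := psiFam_isTopology z hz0 hzI hsub G hGsub
  refine ⟨htop, ?_, ?_⟩
  · intro hG; ext A; simp [PsiFam, hG]
  · rintro ⟨x₀, hx₀⟩
    have hx₀E : x₀ ∈ EGP z := hGsub hx₀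
    set F := PsiFam z G with hF
    have hPdef : PsiPre z G = preOfFam F := rfl
    have hdown : ∀ {A : Finset I}, (PsiPre z G).IsDownset A → A ∈ F := by
      intro A hA; exact downset_mem_fam htop hA
    have tight : ∀ {D : Finset I}, D ∈ F →
        z D ≠ ⊤ ∧ ((∑ i ∈ D, x₀ i : ℝ) : WithTop ℝ) = z D :=
      fun hD => psiFam_tight hx₀ hD
    -- the main splitting engine
    have main : ∀ A B C₁ C₂ : Finset I, (PsiPre z G).IsDownset A →
        (PsiPre z G).IsDownset B → A ⊆ B → Disjoint C₁ C₂ → C₁ ∪ C₂ = B \ A →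
        (∀ u ∈ C₁, ∀ v ∈ C₂, ¬ (PsiPre z G).le u v ∧ ¬ (PsiPre z G).le v u) →
        ∀ U ⊆ B \ A, coRes z A U = coRes z A (U ∩ C₁) + coRes z A (U ∩ C₂) := by
      intro A B C₁ C₂ hA hB hAB hdisj hunion hincomp U hU
      have hAF : A ∈ F := hdown hA
      have hBF : B ∈ F := hdown hB
      -- separating sets
      have sep1 : ∀ u v : I, ∃ D : Finset I,
          u ∈ C₁ → v ∈ C₂ → D ∈ F ∧ u ∈ D ∧ v ∉ D := by
        intro u v
        by_cases hu : u ∈ C₁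
        · by_cases hv : v ∈ C₂
          · have h2 := (hincomp u hu v hv).2
            by_contra hcon
            push_neg at hcon
            exact h2 (fun D hD huD => (hcon D).2.2 hD huD)
          · exact ⟨∅, fun _ hv' => absurd hv' hv⟩
        · exact ⟨∅, fun hu' => absurd hu' hu⟩
      have sep2 : ∀ v u : I, ∃ D : Finset I,
          v ∈ C₂ → u ∈ C₁ → D ∈ F ∧ v ∈ D ∧ u ∉ D := by
        intro v u
        by_cases hv : v ∈ C₂
        · by_cases hu : u ∈ C₁
          · have h1 := (hincomp u hu v hv).1
            by_contra hcon
            push_neg at hcon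
            exact h1 (fun D hD hvD => (hcon D).2.2 hD hvD)
          · exact ⟨∅, fun _ hu' => absurd hu' hu⟩
        · exact ⟨∅, fun hv' => absurd hv' hv⟩
      choose D1 hD1 using sep1
      choose D2 hD2 using sep2
      set S : Finset I := A ∪ (U ∩ C₁).sup (fun u => B ∩ C₂.inf (fun v => D1 u v)) with hSdef
      set T : Finset I := A ∪ (U ∩ C₂).sup (fun v => B ∩ C₁.inf (fun u => D2 v u)) with hTdef
      have hSF : S ∈ F := by
        refine htop.2.2.1 _ hAF _ (sup_mem_fam htop _ _ ?_)
        intro u hu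
        refine htop.2.2.2 _ hBF _ (inf_mem_fam htop _ _ ?_)
        intro v hv
        exact (hD1 u v (Finset.mem_inter.mp hu).2 hv).1
      have hTF : T ∈ F := by
        refine htop.2.2.1 _ hAF _ (sup_mem_fam htop _ _ ?_)
        intro v hv
        refine htop.2.2.2 _ hBF _ (inf_mem_fam htop _ _ ?_)
        intro u hu
        exact (hD2 v u (Finset.mem_inter.mp hv).2 hu).1
      have hSTF : S ∪ T ∈ F := htop.2.2.1 _ hSF _ hTF
      have hAC : ∀ i ∈ A, i ∉ C₁ ∧ i ∉ C₂ := by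
        intro i hi
        constructor <;> intro hic <;>
        · have : i ∈ B \ A := hunion ▸ (by simp [Finset.mem_union, hic])
          exact (Finset.mem_sdiff.mp this).2 hi
      have hSC : ∀ i ∈ S, i ∈ A ∨ i ∈ C₁ := by
        intro i hi
        rcases Finset.mem_union.mp hi with h | h
        · exact Or.inl h
        · obtain ⟨u, hu, hiu⟩ := Finset.mem_sup.mp h
          obtain ⟨hiB, hiinf⟩ := Finset.mem_inter.mp hiu
          by_cases hiA : i ∈ A
          · exact Or.inl hiA
          · have hiBA : i ∈ B \ A := Finset.mem_sdiff.mpr ⟨hiB, hiA⟩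
            rcases Finset.mem_union.mp (hunion ▸ hiBA) with h1 | h2
            · exact Or.inr h1
            · exfalso
              have := (mem_inf_finsets' _ _ i).mp hiinf i h2
              exact (hD1 u i (Finset.mem_inter.mp hu).2 h2).2.2 this
      have hTC : ∀ i ∈ T, i ∈ A ∨ i ∈ C₂ := by
        intro i hi
        rcases Finset.mem_union.mp hi with h | h
        · exact Or.inl h
        · obtain ⟨v, hv, hiv⟩ := Finset.mem_sup.mp h
          obtain ⟨hiB, hiinf⟩ := Finset.mem_inter.mp hiv
          by_cases hiA : i ∈ A
          · exact Or.inl hiA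
          · have hiBA : i ∈ B \ A := Finset.mem_sdiff.mpr ⟨hiB, hiA⟩
            rcases Finset.mem_union.mp (hunion ▸ hiBA) with h1 | h2
            · exfalso
              have := (mem_inf_finsets' _ _ i).mp hiinf i h1
              exact (hD2 v i (Finset.mem_inter.mp hv).2 h1).2.2 this
            · exact Or.inr h2
      have hAS : A ⊆ S := Finset.subset_union_left
      have hAT : A ⊆ T := Finset.subset_union_left
      have hUB : ∀ i ∈ U, i ∈ B ∧ i ∉ A := fun i hi => Finset.mem_sdiff.mp (hU hi)
      have hU1S : U ∩ C₁ ⊆ S := by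
        intro u hu
        obtain ⟨huU, huC⟩ := Finset.mem_inter.mp hu
        refine Finset.mem_union.mpr (Or.inr (Finset.mem_sup.mpr ⟨u, hu, ?_⟩))
        refine Finset.mem_inter.mpr ⟨(hUB u huU).1, (mem_inf_finsets' _ _ u).mpr ?_⟩
        intro v hv
        exact (hD1 u v huC hv).2.1
      have hU2T : U ∩ C₂ ⊆ T := by
        intro v hv
        obtain ⟨hvU, hvC⟩ := Finset.mem_inter.mp hv
        refine Finset.mem_union.mpr (Or.inr (Finset.mem_sup.mpr ⟨v, hv, ?_⟩))
        refine Finset.mem_inter.mpr ⟨(hUB v hvU).1, (mem_inf_finsets' _ _ v).mpr ?_⟩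
        intro u hu
        exact (hD2 v u hvC hu).2.1
      have hST : S ∩ T = A := by
        ext i
        simp only [Finset.mem_inter]
        constructor
        · rintro ⟨hiS, hiT⟩
          rcases hSC i hiS with h | h
          · exact h
          rcases hTC i hiT with h' | h'
          · exact h'
          exact absurd h' (Finset.disjoint_left.mp hdisj h)
        · intro h; exact ⟨hAS h, hAT h⟩
      have hU1A : ∀ i ∈ U ∩ C₁, i ∉ A := fun i hi => (hUB i (Finset.mem_inter.mp hi).1).2
      have hU2A : ∀ i ∈ U ∩ C₂, i ∉ A := fun i hi => (hUB i (Finset.mem_inter.mp hi).1).2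
      have key := key_split z hsub x₀ hx₀E A (U ∩ C₁) (U ∩ C₂) S T
        (tight hSF).1 (tight hSF).2 (tight hTF).1 (tight hTF).2
        (tight hSTF).1 (tight hSTF).2 (tight hAF).1 (tight hAF).2
        hAS hAT hST hU1S hU2T hU1A hU2A
      have hUsplit : A ∪ (U ∩ C₁) ∪ (U ∩ C₂) = A ∪ U := by
        ext i
        simp only [Finset.mem_union, Finset.mem_inter]
        constructor
        · tauto
        · rintro (h | h)
          · tauto
          · have := Finset.mem_union.mp (hunion ▸ hU h)
            tauto
      rw [hUsplit] at key
      obtain ⟨r, hr⟩ := WithTop.ne_top_iff_exists.mp (tight hAF).1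
      exact coRes_split hr.symm key
    constructor
    · -- Compatible
      exact ⟨fun A hA => (hdown hA).1, fun A B hA hB hAB C₁ C₂ hd hu hi U hU =>
        main A B C₁ C₂ hA hB hAB hd hu hi U hU⟩
    · -- decomposition implies incomparability
      intro C hC C₁ C₂ hdisj hunion hsplit u hu v hv
      set P := PsiPre z G
      set DC := P.downClosure C with hDC
      have memDC : ∀ i, i ∈ DC ↔ ∃ c ∈ C, P.le i c := by
        intro i; simp [hDC, Preo.downClosure]
      have hCsubDC : C ⊆ DC := fun c hc => (memDC c).mpr ⟨c, hc, P.le_refl c⟩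
      set A := DC \ C with hA
      have hDCdown : P.IsDownset DC := by
        intro a b hb hab
        obtain ⟨c, hc, hbc⟩ := (memDC b).mp hb
        exact (memDC a).mpr ⟨c, hc, P.le_trans hab hbc⟩
      have hAdown : P.IsDownset A := by
        intro a b hb hab
        obtain ⟨hbDC, hbC⟩ := Finset.mem_sdiff.mp hb
        refine Finset.mem_sdiff.mpr ⟨hDCdown hbDC hab, ?_⟩
        intro haC
        obtain ⟨c, hc, hbc⟩ := (memDC b).mp hbDC
        exact hbC (hC haC hc hab hbc)
      have hAF : A ∈ F := hdown hAdown
      have hDCF : DC ∈ F := hdown hDCdown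
      have hACeq : A ∪ C = DC := by
        ext i
        simp only [Finset.mem_union, hA, Finset.mem_sdiff]
        constructor
        · rintro (⟨h, _⟩ | h)
          · exact h
          · exact hCsubDC h
        · intro h
          by_cases hiC : i ∈ C
          · exact Or.inr hiC
          · exact Or.inl ⟨h, hiC⟩
      have hC1C : C₁ ⊆ C := hunion ▸ Finset.subset_union_left
      have hC2C : C₂ ⊆ C := hunion ▸ Finset.subset_union_right
      have hsp := hsplit C (subset_refl C)
      rw [Finset.inter_eq_right.mpr hC1C, Finset.inter_eq_right.mpr hC2C] at hsp
      -- hsp : zConv z P C C = zConv z P C C₁ + zConv z P C C₂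
      have hzConv : ∀ W, zConv z P C W = coRes z A W := fun W => rfl
      rw [hzConv, hzConv, hzConv] at hsp
      obtain ⟨r, hr⟩ := WithTop.ne_top_iff_exists.mp (tight hAF).1
      obtain ⟨d, hd⟩ := WithTop.ne_top_iff_exists.mp (tight hDCF).1
      have hrA : (z A).untopD 0 = r := by rw [← hr]; rfl
      have hLHS : coRes z A C = ((d - r : ℝ) : WithTop ℝ) := by
        unfold coRes
        rw [hACeq, ← hd, hrA]
        rw [← WithTop.coe_add, ← sub_eq_add_neg]
      have hRfin : coRes z A C₁ ≠ ⊤ ∧ coRes z A C₂ ≠ ⊤ := by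
        apply WithTop.add_ne_top.mp
        rw [← hsp, hLHS]
        exact WithTop.coe_ne_top
      have hC1fin : z (A ∪ C₁) ≠ ⊤ := by
        intro h
        apply hRfin.1
        unfold coRes
        rw [h, top_add]
      have hC2fin : z (A ∪ C₂) ≠ ⊤ := by
        intro h
        apply hRfin.2
        unfold coRes
        rw [h, top_add]
      obtain ⟨p, hp⟩ := WithTop.ne_top_iff_exists.mp hC1fin
      obtain ⟨q, hq⟩ := WithTop.ne_top_iff_exists.mp hC2fin
      have hdr : d + r = p + q := by
        unfold coRes at hsp
        rw [hACeq, ← hd, ← hp, ← hq, hrA] at hsp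
        have : (d : ℝ) + -r = (p + -r) + (q + -r) := by exact_mod_cast hsp
        linarith
      -- now show A ∪ C₂ and A ∪ C₁ are tight for all of G
      have hAdisjC : ∀ i ∈ A, i ∉ C := fun i hi => (Finset.mem_sdiff.mp hi).2
      have huuii : (A ∪ C₁) ∪ (A ∪ C₂) = DC ∧ (A ∪ C₁) ∩ (A ∪ C₂) = A := by
        constructor
        · rw [← hACeq, ← hunion]
          ext i; simp only [Finset.mem_union]; tauto
        · ext i
          simp only [Finset.mem_inter, Finset.mem_union]
          constructor
          · rintro ⟨h1 | h1, h2 | h2⟩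
            · exact h1
            · exact h1
            · exact h2
            · exact absurd h2 (Finset.disjoint_left.mp hdisj h1)
          · intro h; exact ⟨Or.inl h, Or.inl h⟩
      have htight : ∀ w ∈ G, ((∑ i ∈ A ∪ C₁, w i : ℝ) : WithTop ℝ) = z (A ∪ C₁) ∧
          ((∑ i ∈ A ∪ C₂, w i : ℝ) : WithTop ℝ) = z (A ∪ C₂) := by
        intro w hw
        have hwE := hGsub hw
        have h1 : (∑ i ∈ A ∪ C₁, w i : ℝ) ≤ p := by
          have := hwE.2 (A ∪ C₁); rw [← hp] at this; exact_mod_cast this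
        have h2 : (∑ i ∈ A ∪ C₂, w i : ℝ) ≤ q := by
          have := hwE.2 (A ∪ C₂); rw [← hq] at this; exact_mod_cast this
        have h3 : (∑ i ∈ A, w i : ℝ) = r := by
          have := (psiFam_tight hw hAF).2; rw [← hr] at this; exact_mod_cast this
        have h4 : (∑ i ∈ DC, w i : ℝ) = d := by
          have := (psiFam_tight hw hDCF).2; rw [← hd] at this; exact_mod_cast this
        have h5 : ∑ i ∈ (A ∪ C₁) ∪ (A ∪ C₂), w i + ∑ i ∈ (A ∪ C₁) ∩ (A ∪ C₂), w i =
            ∑ i ∈ A ∪ C₁, w i + ∑ i ∈ A ∪ C₂, w i := Finset.sum_union_inter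
        rw [huuii.1, huuii.2, h3, h4] at h5
        constructor
        · rw [← hp]; norm_cast; linarith
        · rw [← hq]; norm_cast; linarith
      have hC1F : A ∪ C₁ ∈ F := ⟨hC1fin, fun w hw => (htight w hw).1⟩
      have hC2F : A ∪ C₂ ∈ F := ⟨hC2fin, fun w hw => (htight w hw).2⟩
      constructor
      · intro hle
        have hmem := hle (A ∪ C₂) hC2F (Finset.mem_union.mpr (Or.inr hv))
        rcases Finset.mem_union.mp hmem with h | h
        · exact hAdisjC u h (hC1C hu)
        · exact Finset.disjoint_left.mp hdisj hu h
      · intro hle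
        have hmem := hle (A ∪ C₁) hC1F (Finset.mem_union.mpr (Or.inr hu))
        rcases Finset.mem_union.mp hmem with h | h
        · exact hAdisjC v h (hC2C hv)
        · exact Finset.disjoint_left.mp hdisj h hv
end
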